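/- Let G be a group acting transitively on a set X, A an abelian group, H = A^X ⋊ G, x ∈ X with stabilizer G_x. Suppose the restriction map H¹(G,A) → H¹(G_x,A) (i.e., Hom(G,A) → Hom(G_x,A)) is surjective. Then any subgroup C ⊂ H with π(C) = G and C ∩ A^X = 1 is conjugate in H to G^χ = {δ(χ(g))·g : g ∈ G} for some homomorphism χ : G → A. -/

import Mathlib

/-- Let `G` act transitively on `X`, `A` an abelian group, `H = A^X ⋊ G`, and `x ∈ X` with
stabilizer `G_x`. If the restriction map `Hom(G, A) → Hom(G_x, A)` is surjective, then any
subgroup `C ⊆ H` with `π(C) = G` and `C ∩ A^X = 1` is conjugate in `H` to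
`G^χ = {δ(χ g) · g : g ∈ G}` for some homomorphism `χ : G → A`. -/
theorem complement_conj_graph_of_restriction_surjective
    {G X A : Type*} [Group G] [MulAction G X] [MulAction.IsPretransitive G X]
    [CommGroup A] (x : X)
    (hres : ∀ ψ : (MulAction.stabilizer G x) →* A, ∃ χ : G →* A,
      ∀ s : MulAction.stabilizer G x, χ s = ψ s)
    (C : Subgroup ((X → A) ⋊[mulAutArrow] G))
    (hsurj : Subgroup.map (SemidirectProduct.rightHom) C = ⊤)
    (htriv : ∀ z ∈ C, z.right = 1 → z = 1) :
    ∃ χ : G →* A, ∃ h : (X → A) ⋊[mulAutArrow] G,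
      (fun k => h * k * h⁻¹) '' (C : Set ((X → A) ⋊[mulAutArrow] G)) =
        Set.range fun g : G => (⟨fun _ => χ g, g⟩ : (X → A) ⋊[mulAutArrow] G) := by
  classical
  -- Choose a section of `rightHom` with values in `C`.
  have hsec : ∀ g : G, ∃ z, z ∈ C ∧ SemidirectProduct.rightHom z = g := by
    intro g
    have : g ∈ Subgroup.map (SemidirectProduct.rightHom) C := hsurj ▸ Subgroup.mem_top g
    rcases this with ⟨z, hz, hz'⟩
    exact ⟨z, hz, hz'⟩
  choose c hcC hcR using hsec
  have hcright : ∀ g, (c g).right = g := fun g => hcR g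
  -- uniqueness: any element of C equals the chosen one with same right part
  have huniq : ∀ z ∈ C, z = c z.right := by
    intro z hz
    have hmem : z * (c z.right)⁻¹ ∈ C := mul_mem hz (inv_mem (hcC _))
    have hr : (z * (c z.right)⁻¹).right = 1 := by
      simp [hcright]
    have h1 := htriv _ hmem hr
    have h2 : z * (c z.right)⁻¹ * (c z.right) = 1 * (c z.right) := by rw [h1]
    simpa using h2
  have hcmul : ∀ g h : G, c (g * h) = c g * c h := by
    intro g h
    have hmem : c g * c h ∈ C := mul_mem (hcC g) (hcC h)
    have := huniq _ hmem
    rw [this]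
    congr 1
    simp [hcright]
  -- the cocycle
  set φ : G → X → A := fun g => (c g).left with hφ
  have hcocycle : ∀ g h : G, ∀ y : X, φ (g * h) y = φ g y * φ h (g⁻¹ • y) := by
    intro g h y
    have hl : (c (g * h)).left = (c g).left * mulAutArrow g (c h).left := by
      rw [hcmul g h, SemidirectProduct.mul_left, hcright]
    show (c (g * h)).left y = (c g).left y * (c h).left (g⁻¹ • y)
    rw [hl]; rfl
  -- restriction to stabilizer is a homomorphism
  have hstab : ∀ s : MulAction.stabilizer G x, (s : G)⁻¹ • x = x := by
    intro s
    have : (s : G) • x = x := s.2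
    exact inv_smul_eq_iff.mpr this.symm
  let ψ : (MulAction.stabilizer G x) →* A :=
    { toFun := fun s => φ (s : G) x
      map_one' := by
        have h1 : c 1 = 1 := by
          have := huniq 1 C.one_mem
          simpa using this.symm
        simp [φ, h1]
      map_mul' := by
        intro s t
        have := hcocycle (s : G) (t : G) x
        rw [hstab s] at this
        simpa using this }
  obtain ⟨χ, hχ⟩ := hres ψ
  -- build the coboundary f
  have htrans : ∀ y : X, ∃ g : G, g • x = y := fun y => MulAction.exists_smul_eq G x y
  choose gg hgg using htrans
  set f : X → A := fun y => φ (gg y) y * (χ (gg y))⁻¹ with hf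
  have key : ∀ (g : G) (y : X), g • x = y → φ g y * (χ g)⁻¹ = f y := by
    intro g y hgy
    set h := gg y with hh
    have hhx : h • x = y := hgg y
    have hs : ((h⁻¹ * g) : G) ∈ MulAction.stabilizer G x := by
      have : (h⁻¹ * g) • x = x := by
        rw [mul_smul, hgy, ← hhx]; simp
      exact this
    set s : MulAction.stabilizer G x := ⟨h⁻¹ * g, hs⟩ with hsdef
    have hgdecomp : g = h * (s : G) := by simp [hsdef]
    have hco := hcocycle h (s : G) y
    have hinv : h⁻¹ • y = x := by rw [← hhx]; simp
    rw [hinv] at hco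
    have hφg : φ g y = φ h y * φ (s : G) x := by rw [hgdecomp]; exact hco
    have hχg : χ g = χ h * χ (s : G) := by rw [hgdecomp]; simp
    have hχs : χ (s : G) = φ (s : G) x := hχ s
    rw [hφg, hχg, hχs, hf]
    simp [mul_comm, mul_assoc, mul_left_comm]
    rfl
  have main : ∀ (g : G) (y : X), φ g y = χ g * f y * (f (g⁻¹ • y))⁻¹ := by
    intro g y
    set z := g⁻¹ • y with hz
    set h := gg z with hh
    have hhx : h • x = z := hgg z
    have hgh : (g * h) • x = y := by rw [mul_smul, hhx, hz]; simp
    have k1 := key (g * h) y hgh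
    have k2 := key h z hhx
    have hco := hcocycle g h y
    rw [← hz] at hco
    rw [hco] at k1
    have hχgh : χ (g * h) = χ g * χ h := by simp
    rw [hχgh] at k1
    rw [← k1, ← k2]
    simp [mul_inv_rev, mul_comm, mul_assoc, mul_left_comm]
  -- conclude
  refine ⟨χ, ⟨f⁻¹, 1⟩, ?_⟩
  have hconj : ∀ g : G, (⟨f⁻¹, 1⟩ : (X → A) ⋊[mulAutArrow] G) * c g * (⟨f⁻¹, 1⟩ : (X → A) ⋊[mulAutArrow] G)⁻¹ =
      (⟨fun _ => χ g, g⟩ : (X → A) ⋊[mulAutArrow] G) := by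
    intro g
    have hcg : c g = ⟨φ g, g⟩ := by
      ext <;> simp [φ, hcright]
    rw [hcg]
    ext y
    · show (f⁻¹ * mulAutArrow (1 : G) (φ g) *
        mulAutArrow ((1 : G) * g) (mulAutArrow (1 : G)⁻¹ (f⁻¹)⁻¹)) y = χ g
      simp only [map_one, MulAut.one_apply, one_mul, inv_inv, inv_one]
      show (f y)⁻¹ * φ g y * f (g⁻¹ • y) = χ g
      rw [main g y]
      simp [mul_comm, mul_assoc, mul_left_comm]
    · simp
  ext w
  simp only [Set.mem_image, Set.mem_range, SetLike.mem_coe]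
  constructor
  · rintro ⟨z, hz, rfl⟩
    refine ⟨z.right, ?_⟩
    rw [huniq z hz, hcright]
    exact (hconj z.right).symm
  · rintro ⟨g, rfl⟩
    exact ⟨c g, hcC g, hconj g⟩
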